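/- Let 1 < p < ∞ and let f : [a,b] → ℝ be Lipschitz with constant L. Then for all a ≤ t₀ ≤ x ≤ t₁ ≤ b, |(x−a)·f(t₀) + (b−x)·f(t₁) − ∫ₐᵇ f(s) ds| ≤ L·[ (t₀−a)²/(p+1)^{1/p} + (t₁−t₀)^{1−1/p}·( ((x−t₀)^{p+1} + (t₁−x)^{p+1}) / (p+1) )^{1/p} + (b−t₁)²/(p+1)^{1/p} ]. -/

import Mathlib

/-- A tagged partition of the interval `[a, b]`. -/
structure TaggedPartition (a b : ℝ) where
  n : ℕ
  pts : ℕ → ℝ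
  tag : ℕ → ℝ
  mono : ∀ i, pts i ≤ pts (i + 1)
  first : pts 0 = a
  last : pts n = b
  tag_mem : ∀ i, pts i ≤ tag i ∧ tag i ≤ pts (i + 1)

/-- The Riemann–Stieltjes sum of `f` with respect to `u` over a tagged partition. -/
def RSsum (f u : ℝ → ℝ) {a b : ℝ} (P : TaggedPartition a b) : ℝ :=
  ∑ i ∈ Finset.range P.n, f (P.tag i) * (u (P.pts (i + 1)) - u (P.pts i))

/-- `IsRSIntegral f u a b I` means the Riemann–Stieltjes integral `∫ₐᵇ f du` exists
and equals `I`: Riemann–Stieltjes sums converge to `I` as the mesh tends to `0`. -/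
def IsRSIntegral (f u : ℝ → ℝ) (a b I : ℝ) : Prop :=
  ∀ ε > 0, ∃ δ > 0, ∀ P : TaggedPartition a b,
    (∀ i < P.n, P.pts (i + 1) - P.pts i < δ) → |RSsum f u P - I| < ε

/-- The total (Jordan) variation of `u` on `[a, b]`. -/
noncomputable def totalVar (u : ℝ → ℝ) (a b : ℝ) : ℝ :=
  (eVariationOn u (Set.Icc a b)).toReal


open MeasureTheory Set intervalIntegral

lemma int_lin_left (L c d : ℝ) : (∫ s in c..d, L * (d - s)) = L * (d - c)^2 / 2 := by
  rw [intervalIntegral.integral_const_mul,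
    intervalIntegral.integral_comp_sub_left (fun x => x) d, integral_id]
  ring

lemma int_lin_right (L c d : ℝ) : (∫ s in c..d, L * (s - c)) = L * (d - c)^2 / 2 := by
  rw [intervalIntegral.integral_const_mul,
    intervalIntegral.integral_comp_sub_right (fun x => x) c, integral_id]
  ring

lemma piece {L c d t0 : ℝ} {f : ℝ → ℝ} (hL : 0 ≤ L) (h1 : c ≤ t0) (h2 : t0 ≤ d)
    (hf : ∀ s ∈ Set.Icc c d, |f t0 - f s| ≤ L * |t0 - s|)
    (hint : IntervalIntegrable f volume c d) :
    |(d - c) * f t0 - ∫ s in c..d, f s| ≤ L * ((t0 - c)^2 + (d - t0)^2) / 2 := by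
  have hcd : c ≤ d := h1.trans h2
  have h1' : IntervalIntegrable f volume c t0 := hint.mono_set
    (by rw [Set.uIcc_of_le h1, Set.uIcc_of_le hcd]; exact Set.Icc_subset_Icc le_rfl h2)
  have h2' : IntervalIntegrable f volume t0 d := hint.mono_set
    (by rw [Set.uIcc_of_le h2, Set.uIcc_of_le hcd]; exact Set.Icc_subset_Icc h1 le_rfl)
  have key : (d - c) * f t0 - ∫ s in c..d, f s
      = (∫ s in c..t0, (f t0 - f s)) + ∫ s in t0..d, (f t0 - f s) := by
    rw [intervalIntegral.integral_sub intervalIntegrable_const h1',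
        intervalIntegral.integral_sub intervalIntegrable_const h2',
        ← intervalIntegral.integral_add_adjacent_intervals h1' h2',
        intervalIntegral.integral_const, intervalIntegral.integral_const]
    simp only [smul_eq_mul]; ring
  have b1 : |∫ s in c..t0, (f t0 - f s)| ≤ L * (t0 - c)^2 / 2 := by
    have hb : ∀ᵐ s ∂(volume.restrict (Set.uIoc c t0)), ‖f t0 - f s‖ ≤ L * (t0 - s) := by
      filter_upwards [MeasureTheory.ae_restrict_mem measurableSet_uIoc] with s hs
      rw [Set.uIoc_of_le h1] at hs
      have := hf s ⟨hs.1.le, hs.2.trans h2⟩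
      rw [Real.norm_eq_abs]
      rwa [abs_of_nonneg (by linarith [hs.2] : (0:ℝ) ≤ t0 - s)] at this
    have hnn : (0:ℝ) ≤ L * (t0 - c)^2 / 2 :=
      div_nonneg (mul_nonneg hL (sq_nonneg _)) two_pos.le
    have h' := intervalIntegral.norm_integral_le_abs_of_norm_le hb
      ((continuous_const.mul (continuous_const.sub continuous_id)).intervalIntegrable _ _)
    rw [int_lin_left, abs_of_nonneg hnn] at h'
    exact h'
  have b2 : |∫ s in t0..d, (f t0 - f s)| ≤ L * (d - t0)^2 / 2 := by
    have hb : ∀ᵐ s ∂(volume.restrict (Set.uIoc t0 d)), ‖f t0 - f s‖ ≤ L * (s - t0) := by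
      filter_upwards [MeasureTheory.ae_restrict_mem measurableSet_uIoc] with s hs
      rw [Set.uIoc_of_le h2] at hs
      have := hf s ⟨h1.trans hs.1.le, hs.2⟩
      rw [Real.norm_eq_abs]
      rwa [abs_of_nonpos (by linarith [hs.1] : t0 - s ≤ 0), neg_sub] at this
    have hnn : (0:ℝ) ≤ L * (d - t0)^2 / 2 :=
      div_nonneg (mul_nonneg hL (sq_nonneg _)) two_pos.le
    have h' := intervalIntegral.norm_integral_le_abs_of_norm_le hb
      ((continuous_const.mul (continuous_id.sub continuous_const)).intervalIntegrable _ _)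
    rw [int_lin_right, abs_of_nonneg hnn] at h'
    exact h'
  calc |(d - c) * f t0 - ∫ s in c..d, f s|
      ≤ |∫ s in c..t0, (f t0 - f s)| + |∫ s in t0..d, (f t0 - f s)| := by
        rw [key]; exact abs_add_le _ _
    _ ≤ L * (t0 - c)^2 / 2 + L * (d - t0)^2 / 2 := add_le_add b1 b2
    _ = L * ((t0 - c)^2 + (d - t0)^2) / 2 := by ring

lemma holder2 {α β p : ℝ} (hα : 0 ≤ α) (hβ : 0 ≤ β) (hp : 1 < p) :
    α^2 + β^2 ≤ (α+β)^(1-1/p) * (α^(p+1)+β^(p+1))^(1/p) := by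
  have hp0 : (0:ℝ) < p := by linarith
  set q := Real.conjExponent p with hq
  have hpq : p.HolderConjugate q := Real.HolderConjugate.conjExponent hp
  have hq0 : (0:ℝ) < q := hpq.symm.pos
  have hqi : 1/q = 1 - 1/p := by
    rw [one_div, ← hpq.one_sub_inv, one_div]
  have h := Real.inner_le_Lp_mul_Lq_of_nonneg (s := (Finset.univ : Finset (Fin 2)))
    (f := ![α^((p+1)/p), β^((p+1)/p)]) (g := ![α^(1/q), β^(1/q)]) hpq
    (fun i _ => by fin_cases i <;> simp <;> positivity)
    (fun i _ => by fin_cases i <;> simp <;> positivity)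
  simp only [Fin.sum_univ_two, Matrix.cons_val_zero, Matrix.cons_val_one, Matrix.head_cons] at h
  have e1 : ∀ γ : ℝ, 0 ≤ γ → γ^((p+1)/p) * γ^(1/q) = γ^2 := by
    intro γ hγ
    have hsum : (p+1)/p + 1/q = 2 := by rw [hqi]; field_simp; ring
    rw [← Real.rpow_add' hγ (by rw [hsum]; norm_num), hsum]
    rw [show (2:ℝ) = ((2:ℕ):ℝ) by norm_num, Real.rpow_natCast]
  have e2 : ∀ γ : ℝ, 0 ≤ γ → (γ^((p+1)/p))^p = γ^(p+1) := by
    intro γ hγ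
    rw [← Real.rpow_mul hγ, div_mul_cancel₀ _ hp0.ne']
  have e3 : ∀ γ : ℝ, 0 ≤ γ → (γ^(1/q))^q = γ := by
    intro γ hγ
    rw [← Real.rpow_mul hγ, one_div_mul_cancel hq0.ne', Real.rpow_one]
  rw [e1 α hα, e1 β hβ, e2 α hα, e2 β hβ, e3 α hα, e3 β hβ, hqi] at h
  linarith [h, mul_comm ((α^(p+1)+β^(p+1))^(1/p)) ((α+β)^(1-1/p))]

lemma two_le : ∀ p : ℝ, 1 < p → (p+1)^(1/p) ≤ 2 := by
  intro p hp
  have hp0 : (0:ℝ) < p := by linarith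
  have h1 : p + 1 ≤ 2^p := by
    have := one_add_mul_self_le_rpow_one_add (by norm_num : (-1:ℝ) ≤ 1) hp.le
    norm_num at this
    linarith
  calc (p+1)^(1/p) ≤ ((2:ℝ)^p)^(1/p) :=
        Real.rpow_le_rpow (by linarith) h1 (by positivity)
    _ = 2 := by
        rw [← Real.rpow_mul (by norm_num), mul_one_div, div_self hp0.ne', Real.rpow_one]

theorem two_point_riemann_lipschitz'
    (a b L p t0 x t1 : ℝ) (f : ℝ → ℝ)
    (hp : 1 < p) (hL : 0 ≤ L)
    (hf : ∀ s ∈ Set.Icc a b, ∀ t ∈ Set.Icc a b, |f s - f t| ≤ L * |s - t|)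
    (ht0 : a ≤ t0) (ht0x : t0 ≤ x) (hxt1 : x ≤ t1) (ht1 : t1 ≤ b) :
    |(x - a) * f t0 + (b - x) * f t1 - ∫ s in a..b, f s| ≤
      L * ((t0 - a) ^ 2 / (p + 1) ^ (1 / p) +
        (t1 - t0) ^ (1 - 1 / p) *
          (((x - t0) ^ (p + 1) + (t1 - x) ^ (p + 1)) / (p + 1)) ^ (1 / p) +
        (b - t1) ^ 2 / (p + 1) ^ (1 / p)) := by
  have hax : a ≤ x := ht0.trans ht0x
  have hxb : x ≤ b := hxt1.trans ht1
  have hab : a ≤ b := hax.trans hxb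
  have ht0ab : t0 ∈ Set.Icc a b := ⟨ht0, ht0x.trans hxb⟩
  have ht1ab : t1 ∈ Set.Icc a b := ⟨ht0.trans (ht0x.trans hxt1), ht1⟩
  have hcont : ContinuousOn f (Set.uIcc a b) := by
    rw [Set.uIcc_of_le hab]
    have hlip : LipschitzOnWith L.toNNReal f (Set.Icc a b) := by
      rw [lipschitzOnWith_iff_dist_le_mul]
      intro s hs t ht
      rw [Real.dist_eq, Real.dist_eq, Real.coe_toNNReal L hL]
      exact hf s hs t ht
    exact hlip.continuousOn
  have hint : IntervalIntegrable f MeasureTheory.volume a b := hcont.intervalIntegrable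
  have hint1 : IntervalIntegrable f MeasureTheory.volume a x := hint.mono_set
    (by rw [Set.uIcc_of_le hax, Set.uIcc_of_le hab]; exact Set.Icc_subset_Icc le_rfl hxb)
  have hint2 : IntervalIntegrable f MeasureTheory.volume x b := hint.mono_set
    (by rw [Set.uIcc_of_le hxb, Set.uIcc_of_le hab]; exact Set.Icc_subset_Icc hax le_rfl)
  have p1 := piece hL ht0 ht0x
    (fun s hs => hf t0 ht0ab s ⟨hs.1, hs.2.trans hxb⟩) hint1
  have p2 := piece hL hxt1 ht1
    (fun s hs => hf t1 ht1ab s ⟨hax.trans hs.1, hs.2⟩) hint2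
  have hsplit := intervalIntegral.integral_add_adjacent_intervals hint1 hint2
  have step1 : |(x - a) * f t0 + (b - x) * f t1 - ∫ s in a..b, f s| ≤
      L * ((t0 - a)^2 + (x - t0)^2) / 2 + L * ((t1 - x)^2 + (b - t1)^2) / 2 := by
    have e : (x - a) * f t0 + (b - x) * f t1 - ∫ s in a..b, f s
        = ((x - a) * f t0 - ∫ s in a..x, f s) + ((b - x) * f t1 - ∫ s in x..b, f s) := by
      rw [← hsplit]; ring
    rw [e]
    exact (abs_add_le _ _).trans (add_le_add p1 p2)
  -- comparisons
  have hp1 : (0:ℝ) < p + 1 := by linarith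
  have hpp : (0:ℝ) < (p + 1) ^ (1/p) := Real.rpow_pos_of_pos hp1 _
  have h2p : (p + 1) ^ (1/p) ≤ 2 := two_le p hp
  have A1 : (t0 - a)^2 / 2 ≤ (t0 - a)^2 / (p + 1) ^ (1/p) :=
    div_le_div_of_nonneg_left (sq_nonneg _) hpp h2p
  have A3 : (b - t1)^2 / 2 ≤ (b - t1)^2 / (p + 1) ^ (1/p) :=
    div_le_div_of_nonneg_left (sq_nonneg _) hpp h2p
  have hα : (0:ℝ) ≤ x - t0 := by linarith
  have hβ : (0:ℝ) ≤ t1 - x := by linarith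
  have hA : (0:ℝ) ≤ (x - t0) ^ (p+1) + (t1 - x) ^ (p+1) := by positivity
  have A2 : ((x - t0)^2 + (t1 - x)^2) / 2 ≤
      (t1 - t0) ^ (1 - 1/p) * (((x - t0) ^ (p+1) + (t1 - x) ^ (p+1)) / (p + 1)) ^ (1/p) := by
    rw [Real.div_rpow hA hp1.le, show t1 - t0 = (x - t0) + (t1 - x) by ring]
    calc ((x - t0)^2 + (t1 - x)^2) / 2
        ≤ ((x - t0)^2 + (t1 - x)^2) / (p + 1) ^ (1/p) :=
          div_le_div_of_nonneg_left (by positivity) hpp h2p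
      _ ≤ (((x - t0) + (t1 - x)) ^ (1 - 1/p) * ((x - t0) ^ (p+1) + (t1 - x) ^ (p+1)) ^ (1/p))
            / (p + 1) ^ (1/p) :=
          (div_le_div_iff_of_pos_right hpp).mpr (holder2 hα hβ hp)
      _ = ((x - t0) + (t1 - x)) ^ (1 - 1/p) *
            (((x - t0) ^ (p+1) + (t1 - x) ^ (p+1)) ^ (1/p) / (p + 1) ^ (1/p)) := by ring
  refine step1.trans ?_
  have hsum : ((t0 - a)^2 + (x - t0)^2) / 2 + ((t1 - x)^2 + (b - t1)^2) / 2 ≤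
      (t0 - a) ^ 2 / (p + 1) ^ (1 / p) +
        (t1 - t0) ^ (1 - 1 / p) *
          (((x - t0) ^ (p + 1) + (t1 - x) ^ (p + 1)) / (p + 1)) ^ (1 / p) +
        (b - t1) ^ 2 / (p + 1) ^ (1 / p) := by
    have := add_le_add (add_le_add A1 A2) A3
    linarith
  calc L * ((t0 - a)^2 + (x - t0)^2) / 2 + L * ((t1 - x)^2 + (b - t1)^2) / 2
      = L * (((t0 - a)^2 + (x - t0)^2) / 2 + ((t1 - x)^2 + (b - t1)^2) / 2) := by ring
    _ ≤ _ := mul_le_mul_of_nonneg_left hsum hL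

theorem two_point_riemann_lipschitz
    (a b L p t0 x t1 : ℝ) (f : ℝ → ℝ)
    (hp : 1 < p) (hL : 0 ≤ L)
    (hf : ∀ s ∈ Set.Icc a b, ∀ t ∈ Set.Icc a b, |f s - f t| ≤ L * |s - t|)
    (ht0 : a ≤ t0) (ht0x : t0 ≤ x) (hxt1 : x ≤ t1) (ht1 : t1 ≤ b) :
    |(x - a) * f t0 + (b - x) * f t1 - ∫ s in a..b, f s| ≤
      L * ((t0 - a) ^ 2 / (p + 1) ^ (1 / p) +
        (t1 - t0) ^ (1 - 1 / p) *
          (((x - t0) ^ (p + 1) + (t1 - x) ^ (p + 1)) / (p + 1)) ^ (1 / p) +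
        (b - t1) ^ 2 / (p + 1) ^ (1 / p)) := by
  exact two_point_riemann_lipschitz' a b L p t0 x t1 f hp hL hf ht0 ht0x hxt1 ht1
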